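/- If a 2-free Tetranacci sequence has period p with 0 < p < 5 (i.e., a_{n+p} = a_n for all n), then it has period 1, i.e., it is constant. -/

import Mathlib

/-- A 2-free Tetranacci sequence: a sequence of odd positive integers in which
each term is the sum of the previous four terms divided by the largest power
of 2 dividing that sum (i.e., the odd part of the sum). -/
def IsTwoFreeTetranacci (a : ℕ → ℕ) : Prop :=
  (∀ n, 0 < a n) ∧ (∀ n, Odd (a n)) ∧
    ∀ n, a (n + 4) =
      (a n + a (n + 1) + a (n + 2) + a (n + 3)) /
        2 ^ padicValNat 2 (a n + a (n + 1) + a (n + 2) + a (n + 3))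

private lemma tri_max {x y z : ℕ} (hx : 0 < x) (hy : 0 < y) (hz : 0 < z) (k0 k1 k2 : ℕ)
    (h1 : y * 2^k0 = 2*x + y + z) (h2 : z * 2^k1 = x + 2*y + z)
    (h3 : x * 2^k2 = x + y + 2*z) (hxy : y ≤ x) (hxz : z ≤ x) :
    x = y ∧ x = z := by
  have hk2 : k2 ≤ 2 := by
    by_contra h
    have h8 : (8 : ℕ) ≤ 2^k2 := by
      calc (8:ℕ) = 2^3 := by norm_num
        _ ≤ 2^k2 := Nat.pow_le_pow_right (by norm_num) (by omega)
    have : x * 8 ≤ x * 2^k2 := Nat.mul_le_mul_left x h8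
    omega
  interval_cases k2
  · norm_num at h3; omega
  · -- k2 = 1 : x = y + 2z
    norm_num at h3
    have e3 : x = y + 2*z := by omega
    -- lower bounds on k0, k1
    have hk0l : 2 ≤ k0 := by
      by_contra h
      have : 2^k0 ≤ 2 := by
        calc 2^k0 ≤ 2^1 := Nat.pow_le_pow_right (by norm_num) (by omega)
          _ = 2 := by norm_num
      have : y * 2^k0 ≤ y * 2 := Nat.mul_le_mul_left y this
      omega
    have hk1l : 2 ≤ k1 := by
      by_contra h
      have : 2^k1 ≤ 2 := by
        calc 2^k1 ≤ 2^1 := Nat.pow_le_pow_right (by norm_num) (by omega)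
          _ = 2 := by norm_num
      have : z * 2^k1 ≤ z * 2 := Nat.mul_le_mul_left z this
      omega
    have hb0 : y * 4 ≤ 2*x + y + z := by
      have h4 : (4:ℕ) ≤ 2^k0 := by
        calc (4:ℕ) = 2^2 := by norm_num
          _ ≤ 2^k0 := Nat.pow_le_pow_right (by norm_num) hk0l
      have := Nat.mul_le_mul_left y h4
      omega
    have hb1 : z * 4 ≤ x + 2*y + z := by
      have h4 : (4:ℕ) ≤ 2^k1 := by
        calc (4:ℕ) = 2^2 := by norm_num
          _ ≤ 2^k1 := Nat.pow_le_pow_right (by norm_num) hk1l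
      have := Nat.mul_le_mul_left z h4
      omega
    have hk0u : k0 ≤ 4 := by
      by_contra h
      have h32 : (32:ℕ) ≤ 2^k0 := by
        calc (32:ℕ) = 2^5 := by norm_num
          _ ≤ 2^k0 := Nat.pow_le_pow_right (by norm_num) (by omega)
      have : y * 32 ≤ y * 2^k0 := Nat.mul_le_mul_left y h32
      omega
    have hk1u : k1 ≤ 4 := by
      by_contra h
      have h32 : (32:ℕ) ≤ 2^k1 := by
        calc (32:ℕ) = 2^5 := by norm_num
          _ ≤ 2^k1 := Nat.pow_le_pow_right (by norm_num) (by omega)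
      have : z * 32 ≤ z * 2^k1 := Nat.mul_le_mul_left z h32
      omega
    interval_cases k0 <;> interval_cases k1 <;> norm_num at h1 h2 <;> omega
  · -- k2 = 2
    norm_num at h3
    omega

private lemma tri {x y z : ℕ} (hx : 0 < x) (hy : 0 < y) (hz : 0 < z) (k0 k1 k2 : ℕ)
    (h1 : y * 2^k0 = 2*x + y + z) (h2 : z * 2^k1 = x + 2*y + z)
    (h3 : x * 2^k2 = x + y + 2*z) : x = y ∧ y = z := by
  by_cases hX : y ≤ x ∧ z ≤ x
  · obtain ⟨e1, e2⟩ := tri_max hx hy hz k0 k1 k2 h1 h2 h3 hX.1 hX.2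
    exact ⟨e1, e1 ▸ e2⟩
  · by_cases hY : x ≤ y ∧ z ≤ y
    · obtain ⟨e1, e2⟩ := tri_max hy hz hx k1 k2 k0
        (h2.trans (by ring)) (h3.trans (by ring)) (h1.trans (by ring)) hY.2 hY.1
      omega
    · have hZ : x ≤ z ∧ y ≤ z := by omega
      obtain ⟨e1, e2⟩ := tri_max hz hx hy k2 k0 k1
        (h3.trans (by ring)) (h1.trans (by ring)) (h2.trans (by ring)) hZ.1 hZ.2
      omega

/-- If a 2-free Tetranacci sequence has period `p` with `0 < p < 5`,
then it has period 1, i.e., it is constant. -/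
theorem period_lt_five_implies_constant (a : ℕ → ℕ) (ha : IsTwoFreeTetranacci a)
    (p : ℕ) (hp : 0 < p) (hp5 : p < 5) (hper : ∀ n, a (n + p) = a n) :
    ∀ n, a (n + 1) = a n := by
  obtain ⟨hpos, hodd, hrec⟩ := ha
  have hstep : ∀ n, a (n + 4) *
      2 ^ padicValNat 2 (a n + a (n + 1) + a (n + 2) + a (n + 3)) =
      a n + a (n + 1) + a (n + 2) + a (n + 3) := by
    intro n
    rw [hrec n]
    exact Nat.div_mul_cancel pow_padicValNat_dvd
  -- uniform argument when the sequence has period 4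
  have main4 : (∀ n, a (n + 4) = a n) → ∀ n, a (n + 1) = a n := by
    intro h4 n
    have e1 := hstep n
    have e2 : a (n + 5) *
        2 ^ padicValNat 2 (a (n+1) + a (n + 2) + a (n + 3) + a (n + 4)) =
        a (n+1) + a (n + 2) + a (n + 3) + a (n + 4) := hstep (n + 1)
    rw [h4 n] at e1
    rw [show a (n + 5) = a (n + 1) from h4 (n + 1)] at e2
    rw [h4 n] at e2
    rw [show a (n+1) + a (n + 2) + a (n + 3) + a n
        = a n + a (n+1) + a (n + 2) + a (n + 3) from by ring] at e2
    have := e1.trans e2.symm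
    exact (Nat.eq_of_mul_eq_mul_right (Nat.pow_pos (by norm_num : (0:ℕ) < 2)) this.symm)
  interval_cases p
  · exact hper
  · refine main4 (fun n => ?_)
    rw [show n + 4 = n + 2 + 2 from by omega, hper, hper]
  · -- period 3
    have h3 : ∀ n, a (n + 3) = a n := hper
    have E0 : a 4 * 2 ^ padicValNat 2 (a 0 + a 1 + a 2 + a 3) =
        a 0 + a 1 + a 2 + a 3 := hstep 0
    have E1 : a 5 * 2 ^ padicValNat 2 (a 1 + a 2 + a 3 + a 4) =
        a 1 + a 2 + a 3 + a 4 := hstep 1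
    have E2 : a 6 * 2 ^ padicValNat 2 (a 2 + a 3 + a 4 + a 5) =
        a 2 + a 3 + a 4 + a 5 := hstep 2
    rw [show a 6 = a 3 from h3 3] at E2
    rw [show a 3 = a 0 from h3 0, show a 4 = a 1 from h3 1] at E0
    rw [show a 3 = a 0 from h3 0, show a 4 = a 1 from h3 1,
        show a 5 = a 2 from h3 2] at E1
    rw [show a 3 = a 0 from h3 0, show a 4 = a 1 from h3 1,
        show a 5 = a 2 from h3 2] at E2
    rw [show a 0 + a 1 + a 2 + a 0 = 2 * a 0 + a 1 + a 2 from by ring] at E0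
    rw [show a 1 + a 2 + a 0 + a 1 = a 0 + 2 * a 1 + a 2 from by ring] at E1
    rw [show a 2 + a 0 + a 1 + a 2 = a 0 + a 1 + 2 * a 2 from by ring] at E2
    obtain ⟨q1, q2⟩ := tri (hpos 0) (hpos 1) (hpos 2) _ _ _ E0 E1 E2
    have hP : Function.Periodic a 3 := h3
    intro n
    have m1 : a (n % 3) = a n := hP.map_mod_nat n
    have m2 : a ((n + 1) % 3) = a (n + 1) := hP.map_mod_nat (n + 1)
    have : n % 3 = 0 ∨ n % 3 = 1 ∨ n % 3 = 2 := by omega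
    rcases this with h | h | h
    · have h' : (n + 1) % 3 = 1 := by omega
      rw [← m1, ← m2, h, h']; exact q1.symm
    · have h' : (n + 1) % 3 = 2 := by omega
      rw [← m1, ← m2, h, h']; exact q2.symm
    · have h' : (n + 1) % 3 = 0 := by omega
      rw [← m1, ← m2, h, h']; omega
  · exact main4 hper
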